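/- Let λ be an infinite cardinal with λ > cf(λ), write κ := cf(λ), and let θ ≤ κ be a cardinal. If Pℓ(κ,θ) holds, then Pℓ(λ,θ) holds. -/

import Mathlib

open Cardinal

/-- `[κ]^{<χ}`: the collection of sets of ordinals below `κ` of cardinality `< χ`. -/
def OSet (κ χ : Cardinal.{0}) : Type 1 :=
  {x : Set Ordinal.{0} // x ⊆ Set.Iio κ.ord ∧ Cardinal.mk x < Cardinal.lift.{1} χ}

/-- The principle `Pℓ(κ,θ)`. -/
def Pl (κ θ : Cardinal.{0}) : Prop :=
  ∃ d : OSet κ ℵ₀ → θ.ord.ToType,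
    ∀ 𝒳 : Set (OSet κ ℵ₀), Cardinal.mk 𝒳 = Cardinal.lift.{1} κ →
      ∀ δ : θ.ord.ToType,
        ∃ x ∈ 𝒳, ∃ y ∈ 𝒳, x ≠ y ∧
          ∀ z : OSet κ ℵ₀, symmDiff x.1 y.1 ⊆ z.1 → z.1 ⊆ x.1 ∪ y.1 → d z = δ

/-- Auxiliary: the cardinality criterion in `OSet` is just finiteness. -/
lemma oset_finite_iff (s : Set Ordinal.{0}) :
    Cardinal.mk s < Cardinal.lift.{1} (ℵ₀ : Cardinal.{0}) ↔ s.Finite := by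
  rw [Cardinal.lift_aleph0, Cardinal.mk_lt_aleph0_iff, Set.finite_coe_iff]

/-- Auxiliary: images through any map respect the "interval" condition of `Pl`. -/
lemma symmDiff_image_subset_image {α β : Type*} (p : α → β) {x y z : Set α}
    (h1 : symmDiff x y ⊆ z) :
    symmDiff (p '' x) (p '' y) ⊆ p '' z := by
  intro ζ hζ
  rw [Set.mem_symmDiff] at hζ
  rcases hζ with ⟨⟨a, hax, rfl⟩, hnot⟩ | ⟨⟨a, hay, rfl⟩, hnot⟩
  · have hay : a ∉ y := fun hy => hnot (Set.mem_image_of_mem p hy)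
    exact Set.mem_image_of_mem p (h1 (Set.mem_symmDiff.2 (Or.inl ⟨hax, hay⟩)))
  · have hax : a ∉ x := fun hx => hnot (Set.mem_image_of_mem p hx)
    exact Set.mem_image_of_mem p (h1 (Set.mem_symmDiff.2 (Or.inr ⟨hay, hax⟩)))

/-- Auxiliary: a family of finite bounded sets of ordinals has cardinality at most
the cardinality of the bound. -/
lemma mk_le_of_finite_bounded_sets {b : Ordinal.{0}} (hb : Ordinal.omega0 ≤ b)
    {α : Type 1} (F : α → Set Ordinal.{0}) (hinj : Function.Injective F)
    (hsub : ∀ a, F a ⊆ Set.Iio b) (hfin : ∀ a, (F a).Finite) :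
    Cardinal.mk α ≤ Cardinal.lift.{1} b.card := by
  have hIinf : Infinite ↥(Set.Iio b) := by
    rw [Cardinal.infinite_iff, Ordinal.mk_Iio_ordinal]
    have : ℵ₀ ≤ b.card := by
      simpa using Ordinal.card_le_card hb
    simpa using Cardinal.lift_le.2 this
  let j : α → Finset ↥(Set.Iio b) := fun a =>
    ((hfin a).preimage (Subtype.val_injective.injOn)).toFinset
  have hjinj : Function.Injective j := by
    intro a a' hj
    apply hinj
    have hcoe : (Subtype.val ⁻¹' (F a) : Set ↥(Set.Iio b)) =
        (Subtype.val ⁻¹' (F a') : Set ↥(Set.Iio b)) := by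
      have := congrArg (fun t : Finset ↥(Set.Iio b) => (t : Set ↥(Set.Iio b))) hj
      simpa [j, Set.Finite.coe_toFinset] using this
    have h1 : Subtype.val '' (Subtype.val ⁻¹' (F a) : Set ↥(Set.Iio b)) = F a := by
      rw [Subtype.image_preimage_coe]
      exact Set.inter_eq_right.2 (hsub a)
    have h2 : Subtype.val '' (Subtype.val ⁻¹' (F a') : Set ↥(Set.Iio b)) = F a' := by
      rw [Subtype.image_preimage_coe]
      exact Set.inter_eq_right.2 (hsub a')
    rw [← h1, ← h2, hcoe]
  calc Cardinal.mk α ≤ Cardinal.mk (Finset ↥(Set.Iio b)) :=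
        Cardinal.mk_le_of_injective hjinj
    _ = Cardinal.mk ↥(Set.Iio b) := Cardinal.mk_finset_of_infinite _
    _ = Cardinal.lift.{1} b.card := Ordinal.mk_Iio_ordinal b

theorem stmt_4 (lam θ : Cardinal.{0}) (hinf : ℵ₀ ≤ lam)
    (hsing : lam.ord.cof < lam) (hθ : θ ≤ lam.ord.cof)
    (h : Pl lam.ord.cof θ) : Pl lam θ := by
  set κ : Cardinal.{0} := lam.ord.cof with hκdef
  obtain ⟨d, hd⟩ := h
  have hlim : Order.IsSuccLimit (lam.ord) := Cardinal.isSuccLimit_ord hinf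
  have hκinf : ℵ₀ ≤ κ := Ordinal.aleph0_le_cof.2 hlim
  have hlaminf : ℵ₀ < lam := lt_of_le_of_lt hκinf hsing
  -- a cofinal family
  obtain ⟨ι, f, hlsub, hι⟩ := Ordinal.exists_lsub_cof lam.ord
  -- identify ι with ordinals below κ.ord
  have hmk : Cardinal.lift.{1} (Cardinal.mk ι) =
      Cardinal.lift.{0} (Cardinal.mk ↥(Set.Iio κ.ord)) := by
    rw [Ordinal.mk_Iio_ordinal, Cardinal.card_ord, Cardinal.lift_id', hι]
  obtain ⟨e⟩ := Cardinal.lift_mk_eq'.1 hmk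
  -- the index map
  have hex : ∀ α : Ordinal.{0}, α < lam.ord → ∃ i, α ≤ f i := by
    intro α hα
    rw [← hlsub] at hα
    exact Ordinal.lt_lsub_iff.1 hα
  classical
  let p : Ordinal.{0} → Ordinal.{0} := fun α =>
    if h : α < lam.ord then (e (hex α h).choose).1 else 0
  have hp1 : ∀ α : Ordinal.{0}, α < lam.ord → p α < κ.ord := by
    intro α hα
    simp only [p, dif_pos hα]
    exact (e (hex α hα).choose).2
  -- the "bound" map back
  let B : Ordinal.{0} → Ordinal.{0} := fun ζ =>
    if h : ζ < κ.ord then f (e.symm ⟨ζ, h⟩) else 0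
  have hB1 : ∀ ζ : Ordinal.{0}, ζ < κ.ord → B ζ < lam.ord := by
    intro ζ hζ
    simp only [B, dif_pos hζ]
    rw [← hlsub]
    exact Ordinal.lt_lsub f _
  have hp2 : ∀ α : Ordinal.{0}, α < lam.ord → α ≤ B (p α) := by
    intro α hα
    have hpα : p α < κ.ord := hp1 α hα
    have hsub : (⟨p α, hpα⟩ : ↥(Set.Iio κ.ord)) = e (hex α hα).choose :=
      Subtype.ext (by simp only [p, dif_pos hα])
    simp only [B, dif_pos hpα, hsub, Equiv.symm_apply_apply]
    exact (hex α hα).choose_spec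
  -- the transfer map on OSet
  let Φ : OSet lam ℵ₀ → OSet κ ℵ₀ := fun x =>
    ⟨p '' x.1, by
      rintro ζ ⟨α, hα, rfl⟩
      exact hp1 α (x.2.1 hα), by
      rw [oset_finite_iff]
      exact Set.Finite.image p ((oset_finite_iff _).1 x.2.2)⟩
  refine ⟨fun z => d (Φ z), ?_⟩
  intro 𝒳 h𝒳 δ
  set 𝒴 : Set (OSet κ ℵ₀) := Φ '' 𝒳 with h𝒴def
  -- fibers of Φ over 𝒳 are small
  have hfiber : ∀ u : OSet κ ℵ₀,
      Cardinal.mk {x : ↥𝒳 // Φ x.1 = u} < Cardinal.lift.{1} lam := by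
    intro u
    have hufin : u.1.Finite := (oset_finite_iff _).1 u.2.2
    set t : Finset Ordinal.{0} := hufin.toFinset with htdef
    set b : Ordinal.{0} := max (t.sup B + 1) Ordinal.omega0 with hbdef
    have hωb : Ordinal.omega0 ≤ b := le_max_right _ _
    have hblt : b < lam.ord := by
      rw [hbdef, max_lt_iff]
      constructor
      · apply hlim.succ_lt
        rw [Finset.sup_lt_iff (by exact hlim.pos)]
        intro ζ hζ
        exact hB1 ζ (u.2.1 (hufin.mem_toFinset.1 hζ))
      · rw [← Cardinal.ord_aleph0]
        exact Cardinal.ord_lt_ord.2 hlaminf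
    have hsub : ∀ x : {x : ↥𝒳 // Φ x.1 = u}, x.1.1.1 ⊆ Set.Iio b := by
      rintro ⟨⟨x, hx⟩, hΦx⟩ α hα
      have hαlam : α < lam.ord := x.2.1 hα
      have hpαu : p α ∈ u.1 := by
        rw [← hΦx]
        exact Set.mem_image_of_mem p hα
      have h1 : α ≤ B (p α) := hp2 α hαlam
      have h2 : B (p α) ≤ t.sup B := Finset.le_sup (hufin.mem_toFinset.2 hpαu)
      have : α < t.sup B + 1 := (h1.trans h2).trans_lt (Order.lt_succ _)
      exact this.trans_le (le_max_left _ _)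
    have hle : Cardinal.mk {x : ↥𝒳 // Φ x.1 = u} ≤ Cardinal.lift.{1} b.card := by
      refine mk_le_of_finite_bounded_sets hωb (fun x => x.1.1.1) ?_ hsub
        (fun x => (oset_finite_iff _).1 x.1.1.2.2)
      intro a a' haa'
      exact Subtype.ext (Subtype.ext (Subtype.ext haa'))
    refine hle.trans_lt ?_
    rw [Cardinal.lift_lt]
    exact Cardinal.lt_ord.1 hblt
  -- 𝒴 has cardinality exactly κ
  have h𝒴le : Cardinal.mk ↥𝒴 ≤ Cardinal.lift.{1} κ := by
    have := mk_le_of_finite_bounded_sets (b := κ.ord) (α := ↥𝒴)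
      (by rw [← Cardinal.ord_aleph0]; exact Cardinal.ord_le_ord.2 hκinf)
      (fun u => u.1.1)
      (fun u u' huu' => Subtype.ext (Subtype.ext huu'))
      (fun u => u.1.2.1) (fun u => (oset_finite_iff _).1 u.1.2.2)
    rwa [Cardinal.card_ord] at this
  have h𝒴eq : Cardinal.mk ↥𝒴 = Cardinal.lift.{1} κ := by
    refine h𝒴le.antisymm ?_
    by_contra hlt
    rw [not_le] at hlt
    -- decompose 𝒳 into fibers
    let q : ↥𝒳 → ↥𝒴 := fun x => ⟨Φ x.1, Set.mem_image_of_mem Φ x.2⟩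
    have hqfib : ∀ u : ↥𝒴,
        Cardinal.mk {x : ↥𝒳 // q x = u} < Cardinal.lift.{1} lam := by
      intro u
      refine lt_of_le_of_lt ?_ (hfiber u.1)
      refine Cardinal.mk_le_of_injective (f := fun x => (⟨x.1, ?_⟩ :
        {x : ↥𝒳 // Φ x.1 = u.1})) ?_
      · exact congrArg Subtype.val x.2
      · intro a a' haa'
        exact Subtype.ext (congrArg (fun t : {x : ↥𝒳 // Φ x.1 = u.1} => t.1) haa')
    have hcof : Cardinal.mk ↥𝒴 < (Cardinal.lift.{1} lam).ord.cof := by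
      rw [← Cardinal.lift_ord, ← Ordinal.lift_cof, ← hκdef]
      exact hlt.trans_le (by rw [Cardinal.lift_le])
    have hsup : (⨆ u : ↥𝒴, Cardinal.mk {x : ↥𝒳 // q x = u}) <
        Cardinal.lift.{1} lam := Ordinal.iSup_lt hcof hqfib
    have hsum : Cardinal.mk ↥𝒳 ≤
        Cardinal.mk ↥𝒴 * ⨆ u : ↥𝒴, Cardinal.mk {x : ↥𝒳 // q x = u} := by
      have hσ : Cardinal.mk ↥𝒳 =
          Cardinal.mk (Σ u : ↥𝒴, {x : ↥𝒳 // q x = u}) :=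
        (Cardinal.mk_congr (Equiv.sigmaFiberEquiv q)).symm
      rw [hσ, Cardinal.mk_sigma]
      exact Cardinal.sum_le_mk_mul_iSup _
    have : Cardinal.mk ↥𝒳 < Cardinal.lift.{1} lam := by
      refine hsum.trans_lt (Cardinal.mul_lt_of_lt ?_ ?_ hsup)
      · exact Cardinal.aleph0_le_lift.2 hinf
      · exact hlt.trans_le (Cardinal.lift_le.2 hsing.le)
    rw [h𝒳] at this
    exact lt_irrefl _ this
  -- apply the colouring property at κ
  obtain ⟨u, hu, v, hv, huv, hcol⟩ := hd 𝒴 h𝒴eq δ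
  obtain ⟨x, hx𝒳, hxu⟩ := hu
  obtain ⟨y, hy𝒳, hyv⟩ := hv
  refine ⟨x, hx𝒳, y, hy𝒳, ?_, ?_⟩
  · rintro rfl
    exact huv (hxu ▸ hyv ▸ rfl)
  · intro z hz1 hz2
    refine hcol (Φ z) ?_ ?_
    · have : symmDiff (p '' x.1) (p '' y.1) ⊆ p '' z.1 :=
        symmDiff_image_subset_image p hz1
      rw [← hxu, ← hyv]
      exact this
    · rw [← hxu, ← hyv]
      show p '' z.1 ⊆ (p '' x.1) ∪ (p '' y.1)
      rw [← Set.image_union]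
      exact Set.image_mono hz2
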